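/- Let X be a Banach space and let f be a continuous linear functional on X with ‖f‖ = 1. Then: (1) for all a, b ∈ ℝ, d_H(f⁻¹((−∞,a]), f⁻¹((−∞,b])) = |a − b|; (2) every nonempty closed convex subset C ⊆ X with d_H(C, f⁻¹((−∞,a])) < ∞ for some a ∈ ℝ is itself of the form C = f⁻¹((−∞,b]) for some b ∈ ℝ. Consequently, the metric component of the half-space f⁻¹((−∞,a]) in Conv_H(X) is isometric to ℝ. -/

import Mathlib

/-- `ConvH X` is the space of all nonempty closed convex subsets of `X`, endowed with the
Hausdorff extended metric (inherited from the extended metric on closed subsets). -/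
abbrev ConvH (X : Type*) [NormedAddCommGroup X] [NormedSpace ℝ X] :=
  {C : TopologicalSpace.Closeds X // (C : Set X).Nonempty ∧ Convex ℝ (C : Set X)}


open EMetric Metric Set TopologicalSpace

section aux
variable {X : Type*} [NormedAddCommGroup X] [NormedSpace ℝ X]

theorem hs_surj (f : X →L[ℝ] ℝ) (hf : ‖f‖ = 1) (t : ℝ) : ∃ x : X, f x = t := by
  have hne : f ≠ 0 := by intro h; rw [h] at hf; simp at hf
  obtain ⟨e, he⟩ := DFunLike.ne_iff.1 hne
  simp only [ContinuousLinearMap.zero_apply] at he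
  refine ⟨(t / f e) • e, ?_⟩
  rw [map_smul, smul_eq_mul, div_mul_cancel₀ _ he]

theorem hs_exists_unit (f : X →L[ℝ] ℝ) (hf : ‖f‖ = 1) {c : ℝ} (hc0 : 0 ≤ c) (hc : c < 1) :
    ∃ v : X, ‖v‖ = 1 ∧ c < f v := by
  have h1 : ¬ (‖f‖ ≤ c) := by rw [hf]; linarith
  have h2 : ¬ (∀ u : X, ‖f u‖ ≤ c * ‖u‖) := fun h => h1 (f.opNorm_le_bound hc0 h)
  push_neg at h2
  obtain ⟨u, hu⟩ := h2
  have hu0 : u ≠ 0 := by rintro rfl; simp at hu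
  have hnu : 0 < ‖u‖ := norm_pos_iff.2 hu0
  rw [Real.norm_eq_abs] at hu
  have hafu : 0 < |f u| := lt_of_le_of_lt (by positivity) hu
  have hfu : f u ≠ 0 := fun h => by rw [h] at hafu; simp at hafu
  refine ⟨(|f u| / (f u * ‖u‖)) • u, ?_, ?_⟩
  · rw [norm_smul, Real.norm_eq_abs, abs_div, abs_mul, abs_abs, abs_norm]
    field_simp
  · rw [map_smul, smul_eq_mul]
    have heq : |f u| / (f u * ‖u‖) * f u = |f u| / ‖u‖ := by field_simp
    rw [heq, lt_div_iff₀ hnu]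
    exact hu

theorem hs_infEdist (f : X →L[ℝ] ℝ) (hf : ‖f‖ = 1) (b : ℝ) (x : X) :
    EMetric.infEdist x {y : X | f y ≤ b} = ENNReal.ofReal (f x - b) := by
  apply le_antisymm
  · rcases le_or_gt (f x) b with h | h
    · have hx : x ∈ {y : X | f y ≤ b} := h
      rw [EMetric.infEdist, infEdist_zero_of_mem hx]; exact zero_le
    · set d := f x - b with hd
      have hd0 : 0 < d := by simp [hd]; linarith
      refine ENNReal.le_of_forall_pos_le_add fun ε hε _ => ?_
      set δ : ℝ := (ε : ℝ) with hδ
      have hδ0 : 0 < δ := hε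
      have hcc : (0:ℝ) ≤ d / (d + δ) := by positivity
      have hcl : d / (d + δ) < 1 := by rw [div_lt_one (by linarith)]; linarith
      obtain ⟨v, hv1, hv2⟩ := hs_exists_unit f hf hcc hcl
      have hfv : 0 < f v := lt_of_le_of_lt hcc hv2
      set t : ℝ := d / f v with ht
      have ht0 : 0 < t := by positivity
      have hmem : x - t • v ∈ {y : X | f y ≤ b} := by
        simp only [Set.mem_setOf_eq, map_sub, map_smul, smul_eq_mul, ht]
        rw [div_mul_cancel₀ _ (ne_of_gt hfv)]
        simp [hd]
      calc EMetric.infEdist x {y : X | f y ≤ b} ≤ edist x (x - t • v) :=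
            infEdist_le_edist_of_mem hmem
        _ = ENNReal.ofReal t := by
            rw [edist_dist, dist_eq_norm]
            simp [norm_smul, hv1, abs_of_pos ht0]
        _ ≤ ENNReal.ofReal (d + δ) := by
            apply ENNReal.ofReal_le_ofReal
            rw [ht, div_le_iff₀ hfv]
            calc d = (d / (d + δ)) * (d + δ) := by field_simp
              _ ≤ f v * (d + δ) := by
                  apply mul_le_mul_of_nonneg_right (le_of_lt hv2) (by linarith)
              _ = (d + δ) * f v := mul_comm _ _
        _ = ENNReal.ofReal d + ε := by
            rw [ENNReal.ofReal_add (le_of_lt hd0) (le_of_lt hδ0)]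
            congr 1
            simp [hδ, ENNReal.ofReal_coe_nnreal]
  · rw [EMetric.infEdist, le_infEdist]
    intro y hy
    rw [edist_dist, dist_eq_norm]
    apply ENNReal.ofReal_le_ofReal
    have := f.le_opNorm (x - y)
    rw [hf, one_mul, map_sub] at this
    have h2 : f x - f y ≤ ‖f x - f y‖ := Real.le_norm_self _
    have h3 : f x - b ≤ f x - f y := by simp only [Set.mem_setOf_eq] at hy; linarith
    linarith

end aux

section aux2
variable {X : Type*} [NormedAddCommGroup X] [NormedSpace ℝ X]

theorem hs_haus_le (f : X →L[ℝ] ℝ) (hf : ‖f‖ = 1) {a b : ℝ} (hba : b ≤ a) :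
    EMetric.hausdorffEdist {x : X | f x ≤ a} {x : X | f x ≤ b} = ENNReal.ofReal (a - b) := by
  apply le_antisymm
  · apply hausdorffEdist_le_of_infEdist
    · intro x hx
      rw [show infEDist x {y : X | f y ≤ b} = ENNReal.ofReal (f x - b) from hs_infEdist f hf b x]
      exact ENNReal.ofReal_le_ofReal (by simp only [Set.mem_setOf_eq] at hx; linarith)
    · intro x hx
      rw [show infEDist x {y : X | f y ≤ a} = ENNReal.ofReal (f x - a) from hs_infEdist f hf a x]
      exact ENNReal.ofReal_le_ofReal (by simp only [Set.mem_setOf_eq] at hx; linarith)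
  · obtain ⟨x, hx⟩ := hs_surj f hf a
    have hxm : x ∈ {y : X | f y ≤ a} := le_of_eq hx
    calc ENNReal.ofReal (a - b) = EMetric.infEdist x {y : X | f y ≤ b} := by
          rw [hs_infEdist f hf, hx]
      _ ≤ _ := infEdist_le_hausdorffEdist_of_mem hxm

theorem hs_haus (f : X →L[ℝ] ℝ) (hf : ‖f‖ = 1) (a b : ℝ) :
    EMetric.hausdorffEdist {x : X | f x ≤ a} {x : X | f x ≤ b} = ENNReal.ofReal |a - b| := by
  rcases le_total b a with h | h
  · rw [hs_haus_le f hf h, abs_of_nonneg (by linarith)]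
  · rw [show EMetric.hausdorffEdist {x : X | f x ≤ a} {x : X | f x ≤ b} = EMetric.hausdorffEdist {x : X | f x ≤ b} {x : X | f x ≤ a} from hausdorffEdist_comm, hs_haus_le f hf h, abs_of_nonpos (by linarith), neg_sub]

theorem hs_part2 (f : X →L[ℝ] ℝ) (hf : ‖f‖ = 1) (C : Set X) (a : ℝ)
    (hCne : C.Nonempty) (hCcl : IsClosed C) (hCco : Convex ℝ C)
    (hfin : EMetric.hausdorffEdist C {x : X | f x ≤ a} < ⊤) :
    ∃ b : ℝ, C = {x : X | f x ≤ b} := by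
  set H := {x : X | f x ≤ a} with hH
  have hbdd : BddAbove (f '' C) := by
    refine ⟨a + (EMetric.hausdorffEdist C H).toReal, ?_⟩
    rintro t ⟨x, hx, rfl⟩
    have h1 : EMetric.infEdist x H ≤ EMetric.hausdorffEdist C H :=
      infEdist_le_hausdorffEdist_of_mem hx
    rw [hs_infEdist f hf, ← ENNReal.ofReal_toReal hfin.ne] at h1
    have := (ENNReal.ofReal_le_ofReal_iff ENNReal.toReal_nonneg).1 h1
    linarith
  set b := sSup (f '' C) with hb
  refine ⟨b, Set.Subset.antisymm (fun x hx => le_csSup hbdd ⟨x, hx, rfl⟩) ?_⟩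
  intro y hy
  simp only [Set.mem_setOf_eq] at hy
  by_contra hyC
  obtain ⟨g, u, hgu, huy⟩ := geometric_hahn_banach_closed_point hCco hCcl hyC
  set R := (EMetric.hausdorffEdist C H + 1).toReal with hR
  set M := u + ‖g‖ * R with hM
  have hbound : ∀ x ∈ H, g x ≤ M := by
    intro x hx
    have h1 : EMetric.infEdist x C < EMetric.hausdorffEdist C H + 1 := by
      calc EMetric.infEdist x C ≤ EMetric.hausdorffEdist H C :=
            infEdist_le_hausdorffEdist_of_mem hx
        _ = EMetric.hausdorffEdist C H := hausdorffEdist_comm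
        _ < _ := ENNReal.lt_add_right hfin.ne one_ne_zero
    obtain ⟨c, hcC, hc⟩ := infEdist_lt_iff.1 h1
    have htop : EMetric.hausdorffEdist C H + 1 ≠ ⊤ := by
      exact ENNReal.add_ne_top.2 ⟨hfin.ne, ENNReal.one_ne_top⟩
    have hdist : dist x c ≤ R := by
      rw [dist_edist]
      exact ENNReal.toReal_mono htop (le_of_lt hc)
    have hg1 : g (x - c) ≤ ‖g‖ * R := by
      have h2 := g.le_opNorm (x - c)
      have h3 : g (x - c) ≤ ‖g (x - c)‖ := Real.le_norm_self _
      have h4 : ‖x - c‖ = dist x c := (dist_eq_norm x c).symm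
      nlinarith [norm_nonneg g, dist_nonneg (x := x) (y := c)]
    have : g x = g c + g (x - c) := by rw [map_sub]; ring
    rw [this, hM]
    have := hgu c hcC
    linarith
  obtain ⟨x0, hx0⟩ := hs_surj f hf a
  obtain ⟨e, he⟩ := hs_surj f hf 1
  have hker : ∀ z : X, f z = 0 → g z = 0 := by
    intro z hz
    by_contra hgz
    have key : ∀ t : ℝ, g x0 + t * g z ≤ M := by
      intro t
      have hmem : x0 + t • z ∈ H := by
        simp only [hH, Set.mem_setOf_eq, map_add, map_smul, smul_eq_mul, hz, hx0, mul_zero,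
          add_zero, le_refl]
      have := hbound _ hmem
      rwa [map_add, map_smul, smul_eq_mul] at this
    have h1 := key ((M - g x0 + 1) / g z)
    rw [div_mul_cancel₀ _ hgz] at h1
    linarith
  set c := g e with hc
  have hgf : ∀ x : X, g x = c * f x := by
    intro x
    have hz : f (x - f x • e) = 0 := by
      rw [map_sub, map_smul, smul_eq_mul, he, mul_one, sub_self]
    have := hker _ hz
    rw [map_sub, map_smul, smul_eq_mul] at this
    linarith
  have hc0 : 0 ≤ c := by
    by_contra hcn
    push_neg at hcn
    set t : ℝ := max 0 (a + (|M| + 1) / (-c)) with ht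
    have ht0 : 0 ≤ t := le_max_left _ _
    have ht1 : a + (|M| + 1) / (-c) ≤ t := le_max_right _ _
    have hmem : x0 - t • e ∈ H := by
      simp only [hH, Set.mem_setOf_eq, map_sub, map_smul, smul_eq_mul, hx0, he, mul_one]
      linarith
    have h1 := hbound _ hmem
    rw [hgf, map_sub, map_smul, smul_eq_mul, hx0, he, mul_one] at h1
    -- h1 : c * (a - t) ≤ M
    have hMle : M ≤ |M| := le_abs_self M
    have hcpos : 0 < -c := by linarith
    have h2 : a - t ≤ -((|M| + 1) / (-c)) := by linarith
    have h3 : c * (a - t) ≥ |M| + 1 := by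
      have := mul_le_mul_of_nonneg_left h2 (le_of_lt hcpos)
      rw [mul_neg, mul_div_cancel₀ _ (ne_of_gt hcpos)] at this
      nlinarith
    linarith
  have hcne : c ≠ 0 := by
    intro h
    obtain ⟨w, hw⟩ := hCne
    have h1 := hgu w hw
    rw [hgf, h, zero_mul] at h1
    rw [hgf, h, zero_mul] at huy
    linarith
  have hcpos : 0 < c := lt_of_le_of_ne hc0 (Ne.symm hcne)
  have hble : b ≤ u / c := by
    apply csSup_le (hCne.image f)
    rintro t ⟨x, hx, rfl⟩
    have := hgu x hx
    rw [hgf] at this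
    rw [le_div_iff₀ hcpos]
    linarith [mul_comm c (f x)]
  rw [hgf] at huy
  have : u / c < f y := by rw [div_lt_iff₀ hcpos]; linarith [mul_comm c (f y)]
  linarith

end aux2

section aux3
variable {X : Type*} [NormedAddCommGroup X] [NormedSpace ℝ X]

theorem hs_img (f : X →L[ℝ] ℝ) (hf : ‖f‖ = 1) (b : ℝ) :
    f '' {x : X | f x ≤ b} = Set.Iic b := by
  ext t
  constructor
  · rintro ⟨x, hx, rfl⟩; exact hx
  · intro ht
    obtain ⟨x, hx⟩ := hs_surj f hf t
    exact ⟨x, by simp [Set.mem_setOf_eq, hx]; exact ht, hx⟩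

theorem hs_part3 (f : X →L[ℝ] ℝ) (hf : ‖f‖ = 1) (a : ℝ) (C₀ : ConvH X)
    (hC₀ : ((C₀ : TopologicalSpace.Closeds X) : Set X) = {x : X | f x ≤ a}) :
    ∃ Φ : {C : ConvH X // edist C C₀ < ⊤} → ℝ,
      Isometry Φ ∧ Function.Bijective Φ := by
  set Φ : {C : ConvH X // edist C C₀ < ⊤} → ℝ :=
    fun C => sSup (f '' ((C.1.1 : Set X))) with hΦdef
  have hedist : ∀ C D : ConvH X,
      edist C D = EMetric.hausdorffEdist (C.1 : Set X) (D.1 : Set X) := fun C D => rfl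
  have hset : ∀ C : {C : ConvH X // edist C C₀ < ⊤},
      ∃ b : ℝ, ((C.1.1 : Set X)) = {x : X | f x ≤ b} := by
    intro C
    apply hs_part2 f hf _ a C.1.2.1 C.1.1.isClosed C.1.2.2
    have h := C.2
    rwa [hedist, hC₀] at h
  have hΦ : ∀ C : {C : ConvH X // edist C C₀ < ⊤},
      ((C.1.1 : Set X)) = {x : X | f x ≤ Φ C} := by
    intro C
    obtain ⟨b, hb⟩ := hset C
    have : Φ C = b := by rw [hΦdef]; simp only [hb, hs_img f hf b, csSup_Iic]
    rw [this, hb]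
  have hiso : Isometry Φ := by
    intro C D
    have h1 : edist C D = EMetric.hausdorffEdist ((C.1.1 : Set X)) ((D.1.1 : Set X)) := rfl
    rw [h1, hΦ C, hΦ D, hs_haus f hf, edist_dist, Real.dist_eq]
  refine ⟨Φ, hiso, hiso.injective, ?_⟩
  intro b
  have hconv : Convex ℝ {x : X | f x ≤ b} := convex_halfSpace_le (f : X →ₗ[ℝ] ℝ).isLinear b
  obtain ⟨x, hx⟩ := hs_surj f hf b
  set K : TopologicalSpace.Closeds X :=
    ⟨{x : X | f x ≤ b}, isClosed_le f.continuous continuous_const⟩ with hK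
  have hKne : (K : Set X).Nonempty := ⟨x, le_of_eq hx⟩
  set CC : ConvH X := ⟨K, hKne, hconv⟩ with hCC
  have hlt : edist CC C₀ < ⊤ := by
    rw [hedist, hC₀]
    show EMetric.hausdorffEdist {x : X | f x ≤ b} {x : X | f x ≤ a} < ⊤
    rw [hs_haus f hf]
    exact ENNReal.ofReal_lt_top
  refine ⟨⟨CC, hlt⟩, ?_⟩
  show sSup (f '' {x : X | f x ≤ b}) = b
  rw [hs_img f hf b, csSup_Iic]

end aux3

/-- For a norm-one continuous linear functional `f` on a Banach space `X`:
(1) `d_H(f⁻¹(-∞,a], f⁻¹(-∞,b]) = |a - b|`;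
(2) every nonempty closed convex set at finite Hausdorff distance from a half-space
`f⁻¹(-∞,a]` is itself a half-space `f⁻¹(-∞,b]`;
consequently (3) the metric component of the half-space `f⁻¹(-∞,a]` in `Conv_H(X)` is
isometric to `ℝ`. -/
theorem halfSpace_component_isometric_real
    {X : Type*} [NormedAddCommGroup X] [NormedSpace ℝ X] [CompleteSpace X]
    (f : X →L[ℝ] ℝ) (hf : ‖f‖ = 1) :
    (∀ a b : ℝ, EMetric.hausdorffEdist {x : X | f x ≤ a} {x : X | f x ≤ b} =
      ENNReal.ofReal |a - b|) ∧
    (∀ (C : Set X) (a : ℝ), C.Nonempty → IsClosed C → Convex ℝ C →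
      EMetric.hausdorffEdist C {x : X | f x ≤ a} < ⊤ → ∃ b : ℝ, C = {x : X | f x ≤ b}) ∧
    (∀ (a : ℝ) (C₀ : ConvH X),
      ((C₀ : TopologicalSpace.Closeds X) : Set X) = {x : X | f x ≤ a} →
      ∃ Φ : {C : ConvH X // edist C C₀ < ⊤} → ℝ,
        Isometry Φ ∧ Function.Bijective Φ) := by
  refine ⟨hs_haus f hf, hs_part2 f hf, hs_part3 f hf⟩
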